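/- If (1, α_1, ..., α_{k-1}) is a ℚ-basis of a real number field K of degree k, then the vector α = (α_1,...,α_{k-1}) ∈ ℝ^{k-1} is badly approximable: there exists c > 0 such that max_i |α_i - p_i/q| ≥ c / q^{1 + 1/(k-1)} for all integers q ≥ 1 and all (p_1,...,p_{k-1}) ∈ ℤ^{k-1}. -/

import Mathlib

open Finset

noncomputable def Complex.abs : AbsoluteValue ℂ ℝ := NormedField.toAbsoluteValue ℂ

lemma Complex.abs_ofReal (r : ℝ) : Complex.abs (r : ℂ) = |r| := by
  show ‖(r:ℂ)‖ = |r|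
  rw [Complex.norm_real, Real.norm_eq_abs]

lemma aux_int_den (r : ℚ) (d : ℕ) (h : r.den ∣ d) : ∃ z : ℤ, (d:ℚ) * r = z := by
  obtain ⟨t, rfl⟩ := h
  have hd : (r.den : ℚ) ≠ 0 := Nat.cast_ne_zero.mpr r.den_nz
  have key : (r.den:ℚ) * r = (r.num:ℚ) := by
    rw [mul_comm]
    exact ((div_eq_iff hd).mp (Rat.num_div_den r)).symm
  refine ⟨t * r.num, ?_⟩
  push_cast
  linear_combination (t:ℚ) * key

lemma aux_int_det {n : ℕ} (M : Matrix (Fin n) (Fin n) ℚ) (h : ∀ i j, ∃ z : ℤ, M i j = z) :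
    ∃ z : ℤ, M.det = z := by
  choose Z hZ using h
  refine ⟨(Matrix.of Z).det, ?_⟩
  have : M = (Int.castRingHom ℚ).mapMatrix (Matrix.of Z) := by
    ext i j
    simp only [RingHom.mapMatrix_apply, Matrix.map_apply, Matrix.of_apply]
    exact hZ i j
  rw [this, ← RingHom.map_det]
  simp

lemma aux_norm_lb {L : Type*} [Field L] [Algebra ℚ L] {n : ℕ}
    (b : Module.Basis (Fin n) ℚ L) :
    ∃ D : ℕ, 0 < D ∧ ∀ y : Fin n → ℤ, y ≠ 0 →
      1 / (D:ℚ) ≤ |Algebra.norm ℚ (∑ l, (y l : ℚ) • b l)| := by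
  have : FiniteDimensional ℚ L := b.finiteDimensional_of_finite
  set d : ℕ := ∏ l : Fin n, ∏ u : Fin n, ∏ w : Fin n, (b.repr (b l * b u) w).den with hd
  have hdpos : 0 < d := by
    apply Finset.prod_pos; intro l _
    apply Finset.prod_pos; intro u _
    apply Finset.prod_pos; intro w _
    exact (b.repr (b l * b u) w).pos
  have hdvd : ∀ l u w : Fin n, (b.repr (b l * b u) w).den ∣ d := by
    intro l u w
    refine dvd_trans (dvd_trans (Finset.dvd_prod_of_mem
        (fun w => (b.repr (b l * b u) w).den) (mem_univ w))
      (Finset.dvd_prod_of_mem (fun u => ∏ w, (b.repr (b l * b u) w).den) (mem_univ u)))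
      (Finset.dvd_prod_of_mem (fun l => ∏ u, ∏ w, (b.repr (b l * b u) w).den) (mem_univ l))
  refine ⟨d ^ n, by positivity, ?_⟩
  intro y hy
  set θ : L := ∑ l, (y l : ℚ) • b l with hθ
  have hθ0 : θ ≠ 0 := by
    intro h0
    apply hy
    have h1 := b.repr_sum_self (fun l => (y l : ℚ))
    rw [← hθ, h0, map_zero] at h1
    funext l
    have h2 := congrFun h1.symm l
    simpa using h2
  set M := Algebra.leftMulMatrix b θ with hM
  have hMent : ∀ u w, ∃ z : ℤ, ((d:ℚ) • M) u w = z := by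
    intro u w
    have hrepr : M u w = ∑ l, (y l : ℚ) * b.repr (b l * b w) u := by
      rw [hM, Algebra.leftMulMatrix_eq_repr_mul, hθ, Finset.sum_mul]
      simp [Finsupp.finset_sum_apply, Finsupp.smul_apply, smul_mul_assoc]
    have : ((d:ℚ) • M) u w = ∑ l, (y l : ℚ) * ((d:ℚ) * b.repr (b l * b w) u) := by
      simp only [Matrix.smul_apply, smul_eq_mul, hrepr, Finset.mul_sum]
      congr 1; funext l; ring
    rw [this]
    have hz : ∀ l : Fin n, ∃ z : ℤ, (d:ℚ) * b.repr (b l * b w) u = z :=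
      fun l => aux_int_den _ _ (hdvd l w u)
    choose z hz using hz
    exact ⟨∑ l, y l * z l, by push_cast; simp_rw [hz]⟩
  obtain ⟨Ndet, hNdet⟩ := aux_int_det _ hMent
  have hdet : ((d:ℚ))^n * M.det = (Ndet : ℚ) := by
    rw [← hNdet, Matrix.det_smul, Fintype.card_fin]
  have hnorm : Algebra.norm ℚ θ = M.det := Algebra.norm_eq_matrix_det b θ
  have hMdet0 : M.det ≠ 0 := by
    rw [← hnorm]
    exact Algebra.norm_ne_zero_iff.mpr hθ0
  have hN0 : Ndet ≠ 0 := by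
    intro h0
    rw [h0, Int.cast_zero] at hdet
    have hd0 : ((d:ℚ))^n ≠ 0 := by positivity
    exact hMdet0 ((mul_eq_zero.mp hdet).resolve_left hd0)
  have h1N : (1:ℚ) ≤ |(Ndet:ℚ)| := by
    rw [← Int.cast_abs]
    exact_mod_cast Int.one_le_abs hN0
  rw [hnorm, div_le_iff₀ (by positivity)]
  push_cast
  calc (1:ℚ) ≤ |(Ndet:ℚ)| := h1N
    _ = |(d:ℚ)^n * M.det| := by rw [hdet]
    _ = |M.det| * (d:ℚ)^n := by
        rw [abs_mul, abs_of_pos (show (0:ℚ) < (d:ℚ)^n by positivity), mul_comm]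

set_option maxHeartbeats 2000000 in
lemma linear_form_bound (m : ℕ) (hm : 1 ≤ m) (α : Fin m → ℝ)
    (K : IntermediateField ℚ ℝ)
    (hli : LinearIndependent ℚ (Fin.cons (1 : ℝ) α))
    (hspan : Submodule.span ℚ (Set.range (Fin.cons (1 : ℝ) α)) =
      Subalgebra.toSubmodule K.toSubalgebra) :
    ∃ c₁ : ℝ, 0 < c₁ ∧ ∀ (x₀ : ℤ) (x : Fin m → ℤ), x ≠ 0 →
      c₁ / ((Finset.univ.sup fun i => (x i).natAbs : ℕ) : ℝ)^m ≤
        |(x₀:ℝ) + ∑ i, (x i:ℝ) * α i| := by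
  classical
  -- basis
  have hmem : ∀ l : Fin (m+1), (Fin.cons (1:ℝ) α : Fin (m+1) → ℝ) l ∈ K := by
    intro l
    have : (Fin.cons (1:ℝ) α : Fin (m+1) → ℝ) l ∈ Submodule.span ℚ (Set.range (Fin.cons (1:ℝ) α)) :=
      Submodule.subset_span ⟨l, rfl⟩
    rw [hspan] at this
    exact this
  set v : Fin (m+1) → K := fun l => ⟨(Fin.cons (1:ℝ) α : Fin (m+1) → ℝ) l, hmem l⟩ with hv
  have hli' : LinearIndependent ℚ v := by
    apply LinearIndependent.of_comp K.val.toLinearMap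
    exact hli
  have hsp' : ⊤ ≤ Submodule.span ℚ (Set.range v) := by
    intro x _
    have hx : (x : ℝ) ∈ Submodule.span ℚ (Set.range (Fin.cons (1:ℝ) α)) := by
      rw [hspan]; exact x.2
    have : (x:ℝ) ∈ Submodule.map K.val.toLinearMap (Submodule.span ℚ (Set.range v)) := by
      rw [Submodule.map_span]
      have hset : ⇑K.val.toLinearMap '' Set.range v = Set.range (Fin.cons (1:ℝ) α) := by
        ext y; constructor
        · rintro ⟨z, ⟨l, rfl⟩, rfl⟩; exact ⟨l, rfl⟩
        · rintro ⟨l, rfl⟩; exact ⟨v l, ⟨l, rfl⟩, rfl⟩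
      rw [hset]; exact hx
    obtain ⟨z, hz, hzx⟩ := this
    have : z = x := Subtype.ext hzx
    rwa [← this]
  let b : Module.Basis (Fin (m+1)) ℚ K := Module.Basis.mk hli' hsp'
  have hb : ∀ l, b l = v l := fun l => Module.Basis.mk_apply hli' hsp' l
  have hFD : FiniteDimensional ℚ K := b.finiteDimensional_of_finite
  have hrank : Module.finrank ℚ K = m + 1 := by
    rw [Module.finrank_eq_card_basis b, Fintype.card_fin]
  -- the real embedding
  let ι : K →ₐ[ℚ] ℂ := (Complex.ofRealAm.restrictScalars ℚ).comp K.val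
  -- constants
  obtain ⟨D, hD, hnormlb⟩ := aux_norm_lb b
  set A : ℝ := ∑ i, |α i| with hA
  have hA0 : 0 ≤ A := Finset.sum_nonneg (fun i _ => abs_nonneg _)
  set B : ℝ := 1 + ∑ σ : K →ₐ[ℚ] ℂ, ∑ l, Complex.abs (σ (v l)) with hB
  have hB1 : 1 ≤ B := by
    rw [hB]
    have : (0:ℝ) ≤ ∑ σ : K →ₐ[ℚ] ℂ, ∑ l, Complex.abs (σ (v l)) :=
      Finset.sum_nonneg fun σ _ => Finset.sum_nonneg fun l _ => AbsoluteValue.nonneg _ _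
    linarith
  have hBbound : ∀ (σ : K →ₐ[ℚ] ℂ) l, Complex.abs (σ (v l)) ≤ B := by
    intro σ l
    rw [hB]
    have h1 : Complex.abs (σ (v l)) ≤ ∑ l, Complex.abs (σ (v l)) :=
      Finset.single_le_sum (f := fun l => Complex.abs (σ (v l)))
        (fun l _ => AbsoluteValue.nonneg _ _) (mem_univ l)
    have h2 : ∑ l, Complex.abs (σ (v l)) ≤ ∑ σ : K →ₐ[ℚ] ℂ, ∑ l, Complex.abs (σ (v l)) :=
      Finset.single_le_sum (f := fun σ : K →ₐ[ℚ] ℂ => ∑ l, Complex.abs (σ (v l)))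
        (fun σ _ => Finset.sum_nonneg fun l _ => AbsoluteValue.nonneg _ _)
        (mem_univ σ)
    linarith
  set B₂ : ℝ := (m+1) * B * (1+A) with hB₂
  have hB₂1 : 1 ≤ B₂ := by
    rw [hB₂]
    have h1 : (1:ℝ) ≤ (m:ℝ)+1 := by linarith [Nat.cast_nonneg (α := ℝ) m]
    have h2 : (1:ℝ) ≤ 1 + A := by linarith
    have hmb : (1:ℝ)*1 ≤ ((m:ℝ)+1)*B := mul_le_mul h1 hB1 zero_le_one (by linarith)
    have h3 : ((1:ℝ)*1)*1 ≤ (((m:ℝ)+1)*B)*(1+A) := mul_le_mul hmb h2 zero_le_one (by linarith)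
    linarith
  refine ⟨min 1 ((1/(D:ℝ)) / B₂^m), lt_min one_pos (by positivity), ?_⟩
  intro x₀ x hx
  set X : ℕ := Finset.univ.sup fun i => (x i).natAbs with hX
  have hX1 : 1 ≤ X := by
    obtain ⟨i, hi⟩ : ∃ i, x i ≠ 0 := by
      by_contra h
      push_neg at h
      exact hx (funext h)
    exact le_trans (Int.natAbs_pos.mpr hi)
      (Finset.le_sup (f := fun i => (x i).natAbs) (mem_univ i))
  have hXR : (1:ℝ) ≤ (X:ℝ) := by exact_mod_cast hX1
  have hxi : ∀ i, |(x i : ℝ)| ≤ (X:ℝ) := by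
    intro i
    have h1 : (x i).natAbs ≤ X := Finset.le_sup (f := fun i => (x i).natAbs) (mem_univ i)
    calc |(x i : ℝ)| = ((x i).natAbs : ℝ) := by
          rw [Nat.cast_natAbs]; push_cast; ring
      _ ≤ (X:ℝ) := by exact_mod_cast h1
  set y : Fin (m+1) → ℤ := Fin.cons x₀ x with hy
  have hy0 : y ≠ 0 := by
    intro h
    apply hx
    funext i
    have h2 := congrFun h i.succ
    simpa only [hy, Fin.cons_succ, Pi.zero_apply] using h2
  set θ : K := ∑ l, (y l : ℚ) • b l with hθ
  have hval : K.val θ = (x₀:ℝ) + ∑ i, (x i:ℝ) * α i := by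
    have hsm : ∀ (q:ℚ) (z:K), K.val (q • z) = q • (K.val z) :=
      fun q z => K.val.toLinearMap.map_smul q z
    rw [hθ, map_sum]
    simp only [hsm]
    rw [Fin.sum_univ_succ]
    have h0 : K.val (b 0) = 1 := by rw [hb]; rfl
    have hs : ∀ i : Fin m, K.val (b i.succ) = α i := by intro i; rw [hb]; simp [hv]
    rw [h0]
    simp only [hs, hy, Fin.cons_zero, Fin.cons_succ]
    push_cast
    simp [Rat.smul_def]
  rw [← hval]
  by_cases hR : 1 ≤ |K.val θ|
  · have h1 : min 1 ((1/(D:ℝ)) / B₂^m) ≤ 1 := min_le_left _ _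
    have h2 : (1:ℝ) ≤ (X:ℝ)^m := one_le_pow₀ hXR
    calc min 1 ((1/(D:ℝ)) / B₂^m) / (X:ℝ)^m ≤ 1 / 1 := by
          apply div_le_div₀ (by norm_num) h1 one_pos h2
      _ = 1 := by norm_num
      _ ≤ |K.val θ| := hR
  · push_neg at hR
    have hx0 : |(x₀:ℝ)| ≤ 1 + A * X := by
      have h1 : |(x₀:ℝ)| ≤ |K.val θ| + |∑ i, (x i:ℝ) * α i| := by
        have : (x₀:ℝ) = K.val θ - ∑ i, (x i:ℝ) * α i := by rw [hval]; ring
        rw [this]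
        exact abs_sub _ _
      have h2 : |∑ i, (x i:ℝ) * α i| ≤ A * X := by
        calc |∑ i, (x i:ℝ) * α i| ≤ ∑ i, |(x i:ℝ) * α i| := Finset.abs_sum_le_sum_abs _ _
          _ ≤ ∑ i, (X:ℝ) * |α i| := by
              apply Finset.sum_le_sum
              intro i _
              rw [abs_mul]
              exact mul_le_mul_of_nonneg_right (hxi i) (abs_nonneg _)
          _ = A * X := by rw [hA, Finset.sum_mul]; congr 1; funext i; ring
      linarith
    have hyb : ∀ l, |(y l : ℝ)| ≤ (1+A) * X := by
      intro l
      refine Fin.cases ?_ ?_ l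
      · simp only [hy, Fin.cons_zero]
        nlinarith [hx0, hXR, hA0]
      · intro i
        simp only [hy, Fin.cons_succ]
        nlinarith [hxi i, hXR, hA0]
    have hσ : ∀ σ : K →ₐ[ℚ] ℂ, Complex.abs (σ θ) ≤ B₂ * X := by
      intro σ
      have h1 : σ θ = ∑ l, ((y l : ℂ)) * σ (b l) := by
        have hsm : ∀ (q:ℚ) (z:K), σ (q • z) = q • (σ z) :=
          fun q z => σ.toLinearMap.map_smul q z
        rw [hθ, map_sum]
        congr 1; funext l
        rw [hsm, Rat.smul_def]
        push_cast
        ring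
      calc Complex.abs (σ θ) ≤ ∑ l, Complex.abs ((y l : ℂ) * σ (b l)) := by
            rw [h1]; exact Complex.abs.sum_le _ _
        _ ≤ ∑ _l : Fin (m+1), ((1+A) * X) * B := by
            apply Finset.sum_le_sum
            intro l _
            rw [map_mul]
            have e1 : Complex.abs ((y l : ℂ)) = |(y l : ℝ)| := by
              rw [show ((y l : ℂ)) = (((y l : ℝ)):ℂ) by push_cast; ring, Complex.abs_ofReal]
            rw [e1]
            have e2 : Complex.abs (σ (b l)) ≤ B := by rw [hb]; exact hBbound σ l
            have := hyb l
            apply mul_le_mul this e2 (AbsoluteValue.nonneg _ _)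
            nlinarith [hA0, hXR]
        _ = B₂ * X := by
            rw [Finset.sum_const, card_univ, Fintype.card_fin, hB₂]
            push_cast
            ring
    have h1 : (1:ℝ)/(D:ℝ) ≤ |((Algebra.norm ℚ θ : ℚ) : ℝ)| := by
      have := hnormlb y hy0
      rw [← hθ] at this
      calc (1:ℝ)/(D:ℝ) = ((1/(D:ℚ) : ℚ) : ℝ) := by push_cast; ring
        _ ≤ ((|Algebra.norm ℚ θ| : ℚ) : ℝ) := by exact_mod_cast this
        _ = |((Algebra.norm ℚ θ : ℚ) : ℝ)| := by push_cast; ring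
    have h2 : |((Algebra.norm ℚ θ : ℚ) : ℝ)| = ∏ σ : K →ₐ[ℚ] ℂ, Complex.abs (σ θ) := by
      have he := Algebra.norm_eq_prod_embeddings ℚ ℂ θ
      have := congrArg Complex.abs he
      rw [map_prod] at this
      rw [← this]
      rw [show (algebraMap ℚ ℂ) (Algebra.norm ℚ θ) = (((Algebra.norm ℚ θ : ℚ) : ℝ) : ℂ) by
        push_cast; simp [Complex.coe_algebraMap]]
      rw [Complex.abs_ofReal]
    have h3 : ∏ σ : K →ₐ[ℚ] ℂ, Complex.abs (σ θ)
        = |K.val θ| * ∏ σ ∈ univ.erase ι, Complex.abs (σ θ) := by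
      rw [← Finset.mul_prod_erase univ _ (mem_univ ι)]
      congr 1
      show Complex.abs (((K.val θ : ℝ)) : ℂ) = _
      rw [Complex.abs_ofReal]
    have h4 : ∏ σ ∈ univ.erase ι, Complex.abs (σ θ) ≤ (B₂ * X)^m := by
      have hcard : (univ.erase ι).card = m := by
        rw [Finset.card_erase_of_mem (mem_univ ι), card_univ, AlgHom.card, hrank]
        omega
      calc ∏ σ ∈ univ.erase ι, Complex.abs (σ θ)
          ≤ ∏ _σ ∈ univ.erase ι, (B₂ * X) :=
            Finset.prod_le_prod (fun σ _ => AbsoluteValue.nonneg _ _) (fun σ _ => hσ σ)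
        _ = (B₂ * X)^m := by rw [Finset.prod_const, hcard]
    have hQpos : (0:ℝ) < (B₂ * X)^m := by positivity
    have h5 : (1:ℝ)/(D:ℝ) ≤ |K.val θ| * (B₂*X)^m := by
      have := mul_le_mul_of_nonneg_left h4 (abs_nonneg (K.val θ))
      calc (1:ℝ)/(D:ℝ) ≤ |((Algebra.norm ℚ θ : ℚ) : ℝ)| := h1
        _ = |K.val θ| * ∏ σ ∈ univ.erase ι, Complex.abs (σ θ) := by rw [h2, h3]
        _ ≤ |K.val θ| * (B₂*X)^m := this
    have h6 : (1/(D:ℝ))/(B₂*X)^m ≤ |K.val θ| := by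
      rw [div_le_iff₀ hQpos]
      linarith
    calc min 1 ((1/(D:ℝ)) / B₂^m) / (X:ℝ)^m ≤ ((1/(D:ℝ)) / B₂^m) / (X:ℝ)^m :=
          (div_le_div_iff_of_pos_right (show (0:ℝ) < (X:ℝ)^m by positivity)).mpr (min_le_right _ _)
      _ = (1/(D:ℝ))/(B₂*X)^m := by rw [div_div, ← mul_pow]
      _ ≤ |K.val θ| := h6

set_option maxHeartbeats 1000000 in
/-- If `(1, α_1, ..., α_m)` is a `ℚ`-basis of a real number field `K` (of degree
`k = m + 1`), then `α = (α_1, ..., α_m)` is badly approximable: there is `c > 0` with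
`max_i |α_i - p_i/q| ≥ c / q^{1 + 1/m}` for all integers `q ≥ 1` and all `p ∈ ℤ^m`. -/
theorem stmt_12 (m : ℕ) (hm : 1 ≤ m) (α : Fin m → ℝ)
    (K : IntermediateField ℚ ℝ)
    (hli : LinearIndependent ℚ (Fin.cons (1 : ℝ) α))
    (hspan : Submodule.span ℚ (Set.range (Fin.cons (1 : ℝ) α)) =
      Subalgebra.toSubmodule K.toSubalgebra) :
    ∃ c : ℝ, 0 < c ∧ ∀ q : ℤ, 1 ≤ q → ∀ p : Fin m → ℤ, ∃ i,
      c / (q : ℝ) ^ ((1 : ℝ) + 1 / m) ≤ |α i - (p i : ℝ) / (q : ℝ)| := by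
  classical
  obtain ⟨c₁, hc₁, hlin⟩ := linear_form_bound m hm α K hli hspan
  have hm0 : (0:ℝ) < m := by exact_mod_cast hm
  refine ⟨c₁ / (m * 2^(m+1)), by positivity, ?_⟩
  intro q hq p
  have hq0 : (0:ℝ) < (q:ℝ) := by exact_mod_cast hq
  have hq1 : (1:ℝ) ≤ (q:ℝ) := by exact_mod_cast hq
  set t : ℝ := (q:ℝ) ^ ((1:ℝ)/m) with ht
  have ht1 : 1 ≤ t := Real.one_le_rpow hq1 (by positivity)
  have ht0 : 0 < t := by linarith
  set X : ℕ := ⌈t⌉₊ with hX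
  have hXt : t ≤ (X:ℝ) := Nat.le_ceil t
  have hXR1 : (1:ℝ) ≤ (X:ℝ) := le_trans ht1 hXt
  have hXle : (X:ℝ) ≤ 2 * t := by
    have := Nat.ceil_lt_add_one (le_of_lt ht0)
    rw [← hX] at this
    linarith
  have htm : t ^ m = (q:ℝ) := by
    rw [ht, ← Real.rpow_natCast ((q:ℝ) ^ ((1:ℝ)/m)) m, ← Real.rpow_mul (le_of_lt hq0)]
    rw [one_div, inv_mul_cancel₀ (by positivity : (m:ℝ) ≠ 0), Real.rpow_one]
  have htm1 : t ^ (m+1) = (q:ℝ) ^ ((1:ℝ) + 1/m) := by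
    rw [ht, ← Real.rpow_natCast ((q:ℝ) ^ ((1:ℝ)/m)) (m+1), ← Real.rpow_mul (le_of_lt hq0)]
    congr 1
    push_cast
    field_simp
  -- pigeonhole
  have hcard : q.toNat < (X+1)^m := by
    have hr : (q:ℝ) < ((X:ℝ)+1)^m := by
      calc (q:ℝ) = t^m := htm.symm
        _ < ((X:ℝ)+1)^m := by
            apply pow_lt_pow_left₀ (by linarith) (le_of_lt ht0)
            omega
    have hq' : ((q.toNat:ℕ):ℝ) = (q:ℝ) := by
      rw [← Int.cast_natCast, Int.toNat_of_nonneg (by omega)]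
    have h6 : ((q.toNat:ℕ):ℝ) < ((X:ℝ)+1)^m := by rw [hq']; exact hr
    exact_mod_cast h6
  haveI : NeZero q.toNat := ⟨by omega⟩
  obtain ⟨a, a', hne, hfeq⟩ := Fintype.exists_ne_map_eq_of_card_lt
    (fun (z : Fin m → Fin (X+1)) => ((∑ i, (z i : ℤ) * p i : ℤ) : ZMod q.toNat))
    (by
      rw [ZMod.card]
      calc q.toNat < (X+1)^m := hcard
        _ = Fintype.card (Fin m → Fin (X+1)) := by
            rw [Fintype.card_fun]
            simp)
  set ych : Fin m → ℤ := fun i => (a i : ℤ) - (a' i : ℤ) with hych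
  have hy0 : ych ≠ 0 := by
    intro h
    apply hne
    funext i
    have h2 := congrFun h i
    simp only [hych, Pi.zero_apply, sub_eq_zero] at h2
    exact Fin.ext (by exact_mod_cast h2)
  have hdvd : (q : ℤ) ∣ ∑ i, ych i * p i := by
    have h1 : ((∑ i, ych i * p i : ℤ) : ZMod q.toNat) = 0 := by
      have : (∑ i, ych i * p i : ℤ) = (∑ i, (a i : ℤ) * p i) - (∑ i, (a' i : ℤ) * p i) := by
        rw [← Finset.sum_sub_distrib]
        congr 1; funext i; rw [hych]; ring
      rw [this, Int.cast_sub, sub_eq_zero]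
      exact hfeq
    have h2 := (ZMod.intCast_zmod_eq_zero_iff_dvd _ _).mp h1
    rwa [Int.toNat_of_nonneg (by omega)] at h2
  obtain ⟨T, hT⟩ := hdvd
  have hyabs : ∀ i, |(ych i : ℝ)| ≤ (X:ℝ) := by
    intro i
    have h1 : (a i : ℤ) ≤ X := by exact_mod_cast Fin.is_le (a i)
    have h2 : (a' i : ℤ) ≤ X := by exact_mod_cast Fin.is_le (a' i)
    have h3 : (0:ℤ) ≤ (a i : ℤ) := by positivity
    have h4 : (0:ℤ) ≤ (a' i : ℤ) := by positivity
    have : |ych i| ≤ (X:ℤ) := by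
      show |(a i:ℤ) - (a' i:ℤ)| ≤ (X:ℤ)
      rw [abs_le]
      omega
    exact_mod_cast this
  have hXy : (Finset.univ.sup fun i => (ych i).natAbs : ℕ) ≤ X := by
    apply Finset.sup_le
    intro i _
    have h5 : ((ych i).natAbs : ℝ) ≤ (X:ℝ) := by
      rw [Nat.cast_natAbs]
      push_cast
      exact hyabs i
    exact_mod_cast h5
  -- linear form value
  have hval : ((-T:ℤ):ℝ) + ∑ i, (ych i:ℝ) * α i
      = (∑ i, (ych i:ℝ) * ((q:ℝ) * α i - (p i : ℝ))) / (q:ℝ) := by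
    have hTr : (∑ i, (ych i:ℝ) * (p i : ℝ)) = (q:ℝ) * (T:ℝ) := by
      have := congrArg (fun z : ℤ => (z:ℝ)) hT
      push_cast at this
      exact this
    have hsplit : ∑ i, (ych i:ℝ) * ((q:ℝ) * α i - (p i:ℝ))
        = (q:ℝ) * (∑ i, (ych i:ℝ) * α i) - ∑ i, (ych i:ℝ) * (p i:ℝ) := by
      rw [Finset.mul_sum, ← Finset.sum_sub_distrib]
      congr 1; funext i; ring
    rw [eq_div_iff (ne_of_gt hq0), hsplit]
    push_cast
    linear_combination hTr
  -- argmax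
  obtain ⟨imax, _, hmax⟩ := Finset.exists_max_image (univ : Finset (Fin m))
      (fun i => |(q:ℝ) * α i - (p i:ℝ)|) ⟨⟨0, hm⟩, mem_univ _⟩
  refine ⟨imax, ?_⟩
  set β : ℝ := |(q:ℝ) * α imax - (p imax:ℝ)| with hβ
  have hβ0 : (0:ℝ) ≤ β := abs_nonneg _
  have h7 : |((-T:ℤ):ℝ) + ∑ i, (ych i:ℝ) * α i| ≤ ((m:ℝ) * X * β) / q := by
    rw [hval, abs_div, abs_of_pos hq0]
    apply div_le_div_of_nonneg_right ?_ hq0.le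
    calc |∑ i, (ych i:ℝ)*((q:ℝ)*α i - (p i:ℝ))|
        ≤ ∑ i, |(ych i:ℝ)*((q:ℝ)*α i - (p i:ℝ))| := Finset.abs_sum_le_sum_abs _ _
      _ ≤ ∑ _i : Fin m, (X:ℝ) * β := by
          apply Finset.sum_le_sum
          intro i _
          rw [abs_mul]
          exact mul_le_mul (hyabs i) (hmax i (mem_univ i)) (abs_nonneg _) (by positivity)
      _ = (m:ℝ) * X * β := by
          rw [Finset.sum_const, card_univ, Fintype.card_fin, nsmul_eq_mul]
          ring
  have hXy1 : 1 ≤ (Finset.univ.sup fun i => (ych i).natAbs) := by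
    obtain ⟨i, hi⟩ : ∃ i, ych i ≠ 0 := by
      by_contra hcon
      push_neg at hcon
      exact hy0 (funext hcon)
    exact le_trans (Int.natAbs_pos.mpr hi)
      (Finset.le_sup (f := fun i => (ych i).natAbs) (mem_univ i))
  have hfirst : c₁ / (X:ℝ)^m ≤ c₁ / ((Finset.univ.sup fun i => (ych i).natAbs : ℕ):ℝ)^m := by
    have hSX : ((Finset.univ.sup fun i => (ych i).natAbs : ℕ):ℝ) ≤ (X:ℝ) := by exact_mod_cast hXy
    have hS1 : (1:ℝ) ≤ ((Finset.univ.sup fun i => (ych i).natAbs : ℕ):ℝ) := by exact_mod_cast hXy1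
    have hpow : ((Finset.univ.sup fun i => (ych i).natAbs : ℕ):ℝ)^m ≤ (X:ℝ)^m :=
      pow_le_pow_left₀ (by positivity) hSX m
    rw [div_le_div_iff₀ (by positivity) (pow_pos (by linarith) m)]
    exact mul_le_mul_of_nonneg_left hpow hc₁.le
  have h8 : c₁ / (X:ℝ)^m ≤ ((m:ℝ) * X * β)/q :=
    le_trans (le_trans hfirst (hlin (-T) ych hy0)) (by push_cast at h7 ⊢; exact h7)
  have h8' : c₁ * (q:ℝ) ≤ (m:ℝ)*X*β*(X:ℝ)^m := by
    rw [div_le_div_iff₀ (by positivity) hq0] at h8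
    exact h8
  have hXp : (X:ℝ)^(m+1) ≤ 2^(m+1) * (q:ℝ)^((1:ℝ)+1/m) := by
    calc (X:ℝ)^(m+1) ≤ (2*t)^(m+1) := pow_le_pow_left₀ (by positivity) hXle _
      _ = 2^(m+1) * t^(m+1) := mul_pow _ _ _
      _ = 2^(m+1) * (q:ℝ)^((1:ℝ)+1/m) := by rw [htm1]
  have hfin : c₁ * (q:ℝ) ≤ (m:ℝ) * 2^(m+1) * (q:ℝ)^((1:ℝ)+1/m) * β := by
    calc c₁ * (q:ℝ) ≤ (m:ℝ)*X*β*(X:ℝ)^m := h8'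
      _ = (m:ℝ) * β * (X:ℝ)^(m+1) := by ring
      _ ≤ (m:ℝ) * β * (2^(m+1) * (q:ℝ)^((1:ℝ)+1/m)) :=
          mul_le_mul_of_nonneg_left hXp (by positivity)
      _ = (m:ℝ) * 2^(m+1) * (q:ℝ)^((1:ℝ)+1/m) * β := by ring
  have habs : |α imax - (p imax:ℝ)/(q:ℝ)| = β / q := by
    rw [show α imax - (p imax:ℝ)/(q:ℝ) = ((q:ℝ)*α imax - (p imax:ℝ))/(q:ℝ) by
      field_simp]
    rw [abs_div, abs_of_pos hq0, hβ]
  rw [habs, div_le_div_iff₀ (Real.rpow_pos_of_pos hq0 _) hq0]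
  have hm2 : (0:ℝ) < (m:ℝ) * 2^(m+1) := by positivity
  rw [div_mul_eq_mul_div, div_le_iff₀ hm2]
  calc c₁ * (q:ℝ) ≤ (m:ℝ) * 2^(m+1) * (q:ℝ)^((1:ℝ)+1/m) * β := hfin
    _ = β * (q:ℝ)^((1:ℝ)+1/m) * ((m:ℝ) * 2^(m+1)) := by ring
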